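/- Let d ≥ 2 be an integer and suppose r_1, …, r_{d−1} are positive real numbers such that M_d(t) = Π_{i=1}^{d−1} (t² + r_i) for all real t. Then for every real t ≥ 0, (2π f_d(t))² = Σ_{i=1}^{d−1} 4 r_i/(t² + r_i)². -/

import Mathlib

open Finset MeasureTheory

/-- `M d t = ∑_{k=0}^{d-1} C(d-1,k)² t^{2k}`. -/
noncomputable def M (d : ℕ) (t : ℝ) : ℝ :=
  ∑ k ∈ Finset.range d, ((d - 1).choose k : ℝ) ^ 2 * t ^ (2 * k)

/-- `A d t = ∑_{k=1}^{d-1} k² C(d-1,k)² t^{2(k-1)}`. -/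
noncomputable def A (d : ℕ) (t : ℝ) : ℝ :=
  ∑ k ∈ Finset.Icc 1 (d - 1), (k : ℝ) ^ 2 * ((d - 1).choose k : ℝ) ^ 2 * t ^ (2 * (k - 1))

/-- `B d t = ∑_{k=1}^{d-1} k C(d-1,k)² t^{2k-1}`. -/
noncomputable def B (d : ℕ) (t : ℝ) : ℝ :=
  ∑ k ∈ Finset.Icc 1 (d - 1), (k : ℝ) * ((d - 1).choose k : ℝ) ^ 2 * t ^ (2 * k - 1)

/-- The density `f d t = (1/π)·√(A_d(t)·M_d(t) − B_d(t)²) / M_d(t)`. -/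
noncomputable def f (d : ℕ) (t : ℝ) : ℝ :=
  (1 / Real.pi) * Real.sqrt (A d t * M d t - (B d t) ^ 2) / M d t

/-- The coefficients `a_k`. -/
noncomputable def a (d k : ℕ) : ℝ :=
  (∑ i ∈ Finset.range d, ∑ j ∈ Finset.range (d - 1),
      if i + j = k then ((d - 1).choose i : ℝ) ^ 2 * ((d - 2).choose j : ℝ) ^ 2 else 0)
  - (∑ i ∈ Finset.range (d - 1), ∑ j ∈ Finset.range (d - 1),
      if i + j + 1 = k then
        ((d - 2).choose i : ℝ) * ((d - 1).choose (i + 1) : ℝ) *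
          ((d - 2).choose j : ℝ) * ((d - 1).choose (j + 1) : ℝ)
      else 0)

section Aux
open Polynomial

noncomputable def Pm' (d : ℕ) : ℝ[X] :=
  ∑ k ∈ Finset.range d, C (((d - 1).choose k : ℝ) ^ 2) * X ^ (2 * k)
noncomputable def PA' (d : ℕ) : ℝ[X] :=
  ∑ k ∈ Finset.range d, C ((k : ℝ) ^ 2 * ((d - 1).choose k : ℝ) ^ 2) * X ^ (2 * (k - 1))

lemma range_eq_insert (d : ℕ) (hd : 1 ≤ d) :
    Finset.range d = insert 0 (Finset.Icc 1 (d - 1)) := by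
  ext k; simp only [Finset.mem_range, Finset.mem_insert, Finset.mem_Icc]; omega

lemma eval_Pm' (d : ℕ) (t : ℝ) : (Pm' d).eval t = M d t := by
  simp [Pm', M, eval_finset_sum]

lemma eval_PA' (d : ℕ) (hd : 1 ≤ d) (t : ℝ) : (PA' d).eval t = A d t := by
  simp only [PA', eval_finset_sum, eval_mul, eval_C, eval_pow, eval_X, A]
  rw [range_eq_insert d hd, Finset.sum_insert (by simp)]
  norm_num

lemma eval_derivPm' (d : ℕ) (hd : 1 ≤ d) (t : ℝ) :
    (derivative (Pm' d)).eval t = 2 * B d t := by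
  simp only [Pm', derivative_sum, derivative_C_mul, derivative_X_pow]
  simp only [eval_finset_sum, eval_mul, eval_C, eval_pow, eval_X, eval_natCast]
  rw [B, Finset.mul_sum, range_eq_insert d hd, Finset.sum_insert (by simp)]
  norm_num
  refine Finset.sum_congr rfl fun k hk => ?_
  push_cast
  ring

lemma deriv_XdPm' (d : ℕ) :
    derivative (X * derivative (Pm' d)) = C 4 * (X * PA' d) := by
  simp only [Pm', PA', derivative_sum, derivative_C_mul, derivative_X_pow,
    Finset.mul_sum]
  refine Finset.sum_congr rfl fun k _ => ?_
  rcases Nat.eq_zero_or_pos k with hk | hk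
  · subst hk; simp
  obtain ⟨m, rfl⟩ : ∃ m, k = m + 1 := ⟨k - 1, by omega⟩
  set c : ℝ := ((d - 1).choose (m + 1) : ℝ) ^ 2 with hc
  rw [show 2 * (m + 1) - 1 = 2 * m + 1 from by omega,
      show 2 * (m + 1 - 1) = 2 * m from by omega]
  rw [show (X : ℝ[X]) * (C c * (C ((2 * (m + 1) : ℕ) : ℝ) * X ^ (2 * m + 1)))
      = C (c * ((2 * (m + 1) : ℕ) : ℝ)) * X ^ (2 * m + 2) from by simp only [C_mul]; ring]
  rw [derivative_C_mul, derivative_X_pow,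
      show 2 * m + 2 - 1 = 2 * m + 1 from by omega]
  rw [show (C 4 : ℝ[X]) * (X * (C (((m + 1 : ℕ) : ℝ) ^ 2 * c) * X ^ (2 * m)))
      = C (4 * (((m + 1 : ℕ) : ℝ) ^ 2 * c)) * X ^ (2 * m + 1) from by simp only [C_mul]; ring]
  rw [← mul_assoc, ← C_mul]
  congr 1
  push_cast
  ring

section prodside
variable {ι : Type*} [Fintype ι] [DecidableEq ι] (r : ι → ℝ)

noncomputable def q' (r : ι → ℝ) : ι → ℝ[X] := fun i => X ^ 2 + C (r i)
noncomputable def P' (r : ι → ℝ) : ℝ[X] := ∏ i, q' r i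
noncomputable def PQ' (r : ι → ℝ) : ℝ[X] := ∑ i, ∏ j ∈ Finset.univ.erase i, q' r j
noncomputable def PR' (r : ι → ℝ) : ℝ[X] :=
  ∑ i, ∑ k ∈ Finset.univ.erase i, ∏ j ∈ (Finset.univ.erase i).erase k, q' r j

lemma derivative_finset_prod' {κ : Type*} [DecidableEq κ] (s : Finset κ) (g : κ → ℝ[X]) :
    derivative (∏ i ∈ s, g i) = ∑ i ∈ s, (∏ j ∈ s.erase i, g j) * derivative (g i) :=
  Polynomial.derivative_prod

lemma deriv_q' (i : ι) : derivative (q' r i) = C 2 * X := by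
  simp [q']
  rw [show (2:ℝ) = 1 + 1 by norm_num, C_add, C_1]

lemma deriv_P' : derivative (P' r) = C 2 * (X * PQ' r) := by
  rw [P', derivative_finset_prod', PQ', Finset.mul_sum, Finset.mul_sum]
  exact Finset.sum_congr rfl fun i _ => by rw [deriv_q']; ring

lemma deriv_PQ' : derivative (PQ' r) = C 2 * (X * PR' r) := by
  rw [PQ', derivative_sum, PR', Finset.mul_sum, Finset.mul_sum]
  refine Finset.sum_congr rfl fun i _ => ?_
  rw [derivative_finset_prod', Finset.mul_sum, Finset.mul_sum]
  exact Finset.sum_congr rfl fun k _ => by rw [deriv_q']; ring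

lemma deriv_XdP' :
    derivative (X * derivative (P' r)) = C 4 * (X * (PQ' r + X ^ 2 * PR' r)) := by
  rw [deriv_P', show (X : ℝ[X]) * (C 2 * (X * PQ' r)) = C 2 * (X ^ 2 * PQ' r) from by ring,
    derivative_C_mul, derivative_mul, derivative_X_pow, deriv_PQ']
  push_cast
  rw [show (C 4 : ℝ[X]) = C 2 ^ 2 from by rw [← map_pow]; norm_num]
  ring

end prodside


lemma ring_key {ι : Type*} [DecidableEq ι] (s : Finset ι) (p c : ι → ℝ) (x : ℝ)
    (hq : ∀ i ∈ s, p i = x ^ 2 + c i) :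
    (∑ i ∈ s, ∏ j ∈ s.erase i, p j
        + x ^ 2 * ∑ i ∈ s, ∑ k ∈ s.erase i, ∏ j ∈ (s.erase i).erase k, p j) * ∏ j ∈ s, p j
      - (x * ∑ i ∈ s, ∏ j ∈ s.erase i, p j) ^ 2
      = ∑ i ∈ s, c i * (∏ j ∈ s.erase i, p j) ^ 2 := by
  set Q := ∑ i ∈ s, ∏ j ∈ s.erase i, p j with hQ
  set P := ∏ j ∈ s, p j with hP
  have h1 : Q * P = ∑ i ∈ s, p i * (∏ j ∈ s.erase i, p j) ^ 2 := by
    rw [hQ, Finset.sum_mul]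
    refine Finset.sum_congr rfl fun i hi => ?_
    rw [hP, ← Finset.mul_prod_erase s p hi]; ring
  have h2 : (∑ i ∈ s, ∑ k ∈ s.erase i, ∏ j ∈ (s.erase i).erase k, p j) * P
      = ∑ i ∈ s, ∑ k ∈ s.erase i, (∏ j ∈ s.erase i, p j) * (∏ j ∈ s.erase k, p j) := by
    rw [Finset.sum_mul]
    refine Finset.sum_congr rfl fun i hi => ?_
    rw [Finset.sum_mul]
    refine Finset.sum_congr rfl fun k hk => ?_
    have hks : k ∈ s := Finset.mem_of_mem_erase hk
    have his : i ∈ (s.erase k) := Finset.mem_erase.2 ⟨fun h => (Finset.mem_erase.1 hk).1 h.symm, hi⟩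
    have e1 : ∏ j ∈ s.erase i, p j = p k * ∏ j ∈ (s.erase i).erase k, p j :=
      (Finset.mul_prod_erase _ p hk).symm
    have e2 : ∏ j ∈ s.erase k, p j = p i * ∏ j ∈ (s.erase i).erase k, p j := by
      rw [← Finset.mul_prod_erase _ p his, Finset.erase_right_comm]
    rw [e1, e2, hP, ← Finset.mul_prod_erase s p hks, e2]
    ring
  have h3 : Q ^ 2 = ∑ i ∈ s, (∏ j ∈ s.erase i, p j) ^ 2
      + ∑ i ∈ s, ∑ k ∈ s.erase i, (∏ j ∈ s.erase i, p j) * (∏ j ∈ s.erase k, p j) := by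
    have : Q ^ 2 = ∑ i ∈ s, (∏ j ∈ s.erase i, p j) * Q := by
      rw [hQ, ← Finset.sum_mul]; ring
    rw [this, ← Finset.sum_add_distrib]
    refine Finset.sum_congr rfl fun i hi => ?_
    rw [hQ, ← Finset.add_sum_erase s _ hi, mul_add, Finset.mul_sum, sq]
  have expand : (Q + x ^ 2 * ∑ i ∈ s, ∑ k ∈ s.erase i, ∏ j ∈ (s.erase i).erase k, p j) * P
      - (x * Q) ^ 2
      = Q * P + x ^ 2 * ((∑ i ∈ s, ∑ k ∈ s.erase i, ∏ j ∈ (s.erase i).erase k, p j) * P)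
        - x ^ 2 * Q ^ 2 := by ring
  rw [expand, h1, h2, h3, mul_add, Finset.mul_sum]
  rw [add_sub_add_comm, sub_self, add_zero, Finset.mul_sum, ← Finset.sum_sub_distrib]
  refine Finset.sum_congr rfl fun i hi => ?_
  rw [hq i hi]; ring

lemma main_identity (d : ℕ) (hd : 2 ≤ d) (r : Fin (d - 1) → ℝ)
    (hM : ∀ t : ℝ, M d t = ∏ i, (t ^ 2 + r i)) (t : ℝ) :
    A d t * M d t - (B d t) ^ 2
      = ∑ i, r i * (∏ j ∈ Finset.univ.erase i, (t ^ 2 + r j)) ^ 2 := by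
  have hd1 : 1 ≤ d := le_trans (by norm_num) hd
  have hPmP : Pm' d = P' r := by
    apply Polynomial.funext
    intro x
    rw [eval_Pm', hM x, P']
    simp [q', eval_prod]
  have hPA : PA' d = PQ' r + X ^ 2 * PR' r := by
    have h4 := deriv_XdPm' d
    rw [hPmP, deriv_XdP'] at h4
    have hne : (C 4 * X : ℝ[X]) ≠ 0 :=
      mul_ne_zero (C_ne_zero.mpr (by norm_num)) X_ne_zero
    apply mul_left_cancel₀ hne
    rw [mul_assoc, mul_assoc, ← h4]
  -- evaluate
  have evq : ∀ (s : Finset (Fin (d-1))), (∏ j ∈ s, q' r j).eval t = ∏ j ∈ s, (t ^ 2 + r j) := by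
    intro s; simp [q', eval_prod]
  have hB : B d t = t * (PQ' r).eval t := by
    have := eval_derivPm' d hd1 t
    rw [hPmP, deriv_P'] at this
    simp only [eval_mul, eval_C, eval_X] at this
    linarith
  have hA : A d t = (PQ' r).eval t + t ^ 2 * (PR' r).eval t := by
    rw [← eval_PA' d hd1 t, hPA]
    simp
  have hMt : M d t = ∏ i, (t ^ 2 + r i) := hM t
  rw [hA, hB, hMt]
  have hQ : (PQ' r).eval t = ∑ i, ∏ j ∈ Finset.univ.erase i, (t ^ 2 + r j) := by
    rw [PQ']; simp only [eval_finset_sum]; exact Finset.sum_congr rfl fun i _ => evq _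
  have hR : (PR' r).eval t
      = ∑ i, ∑ k ∈ Finset.univ.erase i, ∏ j ∈ (Finset.univ.erase i).erase k, (t ^ 2 + r j) := by
    rw [PR']; simp only [eval_finset_sum]
    exact Finset.sum_congr rfl fun i _ => Finset.sum_congr rfl fun k _ => evq _
  rw [hQ, hR]
  exact ring_key Finset.univ (fun i => t ^ 2 + r i) r t (fun i _ => rfl)


theorem stmt_15_aux (d : ℕ) (hd : 2 ≤ d) (r : Fin (d - 1) → ℝ) (hr : ∀ i, 0 < r i)
    (hM : ∀ t : ℝ, M d t = ∏ i, (t ^ 2 + r i)) (t : ℝ) (ht : 0 ≤ t) :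
    (2 * Real.pi * ((1 / Real.pi) * Real.sqrt (A d t * M d t - (B d t) ^ 2) / M d t)) ^ 2
      = ∑ i, 4 * r i / (t ^ 2 + r i) ^ 2 := by
  have hppos : ∀ i, 0 < t ^ 2 + r i := fun i =>
    add_pos_of_nonneg_of_pos (sq_nonneg t) (hr i)
  have hMpos : 0 < M d t := by
    rw [hM t]; exact Finset.prod_pos fun i _ => hppos i
  have hS := main_identity d hd r hM t
  have hSnn : 0 ≤ A d t * M d t - B d t ^ 2 := by
    rw [hS]
    exact Finset.sum_nonneg fun i _ => mul_nonneg (hr i).le (sq_nonneg _)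
  have hπ : Real.pi ≠ 0 := Real.pi_ne_zero
  have step1 : 2 * Real.pi * ((1 / Real.pi) * Real.sqrt (A d t * M d t - (B d t) ^ 2) / M d t)
      = 2 * Real.sqrt (A d t * M d t - (B d t) ^ 2) / M d t := by
    field_simp
  rw [step1, div_pow, mul_pow, Real.sq_sqrt hSnn]
  rw [hS, hM t]
  rw [show (2:ℝ) ^ 2 = 4 by norm_num, Finset.mul_sum, Finset.sum_div]
  refine Finset.sum_congr rfl fun i _ => ?_
  rw [← Finset.mul_prod_erase Finset.univ _ (Finset.mem_univ i), mul_pow]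
  have hE : (∏ j ∈ Finset.univ.erase i, (t ^ 2 + r j)) ^ 2 ≠ 0 :=
    pow_ne_zero _ (ne_of_gt (Finset.prod_pos fun j _ => hppos j))
  rw [show 4 * (r i * (∏ j ∈ Finset.univ.erase i, (t ^ 2 + r j)) ^ 2)
      = 4 * r i * (∏ j ∈ Finset.univ.erase i, (t ^ 2 + r j)) ^ 2 by ring,
    mul_div_mul_right _ _ hE]

end Aux

theorem stmt_15 (d : ℕ) (hd : 2 ≤ d) (r : Fin (d - 1) → ℝ) (hr : ∀ i, 0 < r i)
    (hM : ∀ t : ℝ, M d t = ∏ i, (t ^ 2 + r i)) (t : ℝ) (ht : 0 ≤ t) :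
    (2 * Real.pi * f d t) ^ 2 = ∑ i, 4 * r i / (t ^ 2 + r i) ^ 2 := by
  simp only [f]
  exact stmt_15_aux d hd r hr hM t ht
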